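/- (Zeilberger–Bressoud $q$-Dyson theorem, case $n=2$.) For nonnegative integers $a_1, a_2$, the constant term in $x_1, x_2$ of the Laurent polynomial $(x_1/x_2;q)_{a_1} (q x_2/x_1;q)_{a_2}$ equals $\binom{a_1+a_2}{a_1}_q = \frac{(q;q)_{a_1+a_2}}{(q;q)_{a_1}(q;q)_{a_2}}$. -/

import Mathlib

noncomputable section

/-- The field ℚ(q). -/
abbrev F : Type := RatFunc ℚ

/-- The variable `q`. -/
def qq : F := RatFunc.X

/-- Laurent polynomials in `x_1, …, x_n` over ℚ(q). -/
abbrev R (n : ℕ) : Type := AddMonoidAlgebra F (Fin n →₀ ℤ)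

/-- The Laurent monomial `x^u = x_1^{u_1} ⋯ x_n^{u_n}`. -/
def Xm {n : ℕ} (u : Fin n → ℤ) : R n :=
  AddMonoidAlgebra.single (Finsupp.equivFunOnFinite.symm u) 1

/-- Scalar (coefficient) embedding of ℚ(q). -/
def CC {n : ℕ} (c : F) : R n := AddMonoidAlgebra.single 0 c

/-- The constant term: the coefficient of `x_1^0 ⋯ x_n^0`. -/
def CT {n : ℕ} (p : R n) : F := p.coeff 0

/-- q-shifted factorial `(z;q)_m`. -/
def qpoch {A : Type*} [CommRing A] (z q : A) (m : ℕ) : A :=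
  ∏ l ∈ Finset.range m, (1 - z * q ^ l)

/-- q-binomial coefficient `[N, k]_q = (q^{N-k+1};q)_k / (q;q)_k`. -/
def qbinom (N k : ℕ) : F := qpoch (qq ^ ((N : ℤ) - k + 1)) qq k / qpoch qq qq k

/-- Complete homogeneous symmetric polynomial `h_r` of a list of elements. -/
def hh {A : Type*} [CommRing A] : ℕ → List A → A
  | 0, _ => 1
  | _ + 1, [] => 0
  | r + 1, z :: L => z * hh r (z :: L) + hh (r + 1) L
  termination_by r L => (r, L.length)

/-- The q-Dyson Laurent polynomial `∏_{i<j} (x_i/x_j;q)_{a_i} (q x_j/x_i;q)_{a_j}`. -/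
def dyson {n : ℕ} (a : Fin n → ℕ) : R n :=
  ∏ i : Fin n, ∏ j ∈ Finset.Ioi i,
    qpoch (Xm (Pi.single i 1 - Pi.single j 1)) (CC qq) (a i) *
      qpoch (CC qq * Xm (Pi.single j 1 - Pi.single i 1)) (CC qq) (a j)

/-- The alphabet `x^(a) = (x_j q^l : 1 ≤ j ≤ n, 0 ≤ l ≤ a_j - 1)` as a list. -/
def baseAlph {n : ℕ} (a : Fin n → ℕ) : List (R n) :=
  (List.finRange n).flatMap fun j =>
    (List.range (a j)).map fun l => Xm (Pi.single j 1) * CC (qq ^ l)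

/-- The alphabet `x_i^(a)`: `x^(a)` together with the extra element `x_i q⁻¹`. -/
def alph {n : ℕ} (a : Fin n → ℕ) (i : Fin n) : List (R n) :=
  (Xm (Pi.single i 1) * CC qq⁻¹) :: baseAlph a

/-- The generalized q-Dyson constant term `D_{v,λ}(a)`. -/
def Dconst {n : ℕ} (a : Fin n → ℕ) (v : Fin n → ℤ) (lam : Fin n → ℕ) : F :=
  CT (Xm (fun i => -v i) * (∏ i : Fin n, hh (lam i) (alph a i)) * dyson a)


namespace QD
open Finset

lemma qq_ne_zero : qq ≠ 0 := RatFunc.X_ne_zero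

lemma one_sub_qq_pow_ne_zero {j : ℕ} (hj : 1 ≤ j) : (1 : F) - qq ^ j ≠ 0 := by
  intro h
  have hx : (RatFunc.X : F) ^ j = 1 := by
    have := sub_eq_zero.mp h
    simpa [qq] using this.symm
  rw [← RatFunc.algebraMap_X, ← map_pow, ← map_one (algebraMap (Polynomial ℚ) F)] at hx
  have h2 := RatFunc.algebraMap_injective ℚ hx
  have hdeg := congrArg Polynomial.natDegree h2
  simp [Polynomial.natDegree_X_pow] at hdeg
  omega

/-- `T u k = (1-q^u)(1-q^{u+1})⋯(1-q^{u+k-1})`. -/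
def T (u k : ℕ) : F := ∏ l ∈ Finset.range k, (1 - qq ^ (u + l))

lemma T_ne_zero {u k : ℕ} (hu : 1 ≤ u) : T u k ≠ 0 := by
  apply Finset.prod_ne_zero_iff.mpr
  intro l _
  exact one_sub_qq_pow_ne_zero (by omega)

lemma T_succ (u k : ℕ) : T u (k+1) = T u k * (1 - qq ^ (u + k)) := Finset.prod_range_succ _ _

lemma T_succ' (u k : ℕ) : T u (k+1) = (1 - qq ^ u) * T (u+1) k := by
  rw [T, Finset.prod_range_succ', mul_comm]
  congr 1
  exact Finset.prod_congr rfl fun l _ => by rw [show u + (l+1) = u+1+l by omega]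

/-- numerator of qbinom -/
def Nm (N k : ℕ) : F := qpoch (qq ^ ((N:ℤ) - k + 1)) qq k

lemma qbinom_def' (N k : ℕ) : qbinom N k = Nm N k / T 1 k := by
  unfold qbinom Nm T qpoch
  congr 1
  exact Finset.prod_congr rfl fun l _ => by rw [pow_add, pow_one]

lemma Nm_eq_T {N k : ℕ} (h : k ≤ N + 1) : Nm N k = T (N + 1 - k) k := by
  unfold Nm qpoch T
  apply Finset.prod_congr rfl
  intro l _
  congr 1
  rw [show ((N:ℤ) - k + 1) = ((N+1-k : ℕ) : ℤ) by omega,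
    zpow_natCast, ← pow_add]

lemma qbinom_zero_of_lt {N k : ℕ} (h : N < k) : qbinom N k = 0 := by
  unfold qbinom qpoch
  rw [div_eq_zero_iff]
  left
  apply Finset.prod_eq_zero (i := k - N - 1) (by simp [Finset.mem_range]; omega)
  have hz : qq ^ ((N:ℤ) - k + 1) * qq ^ (k - N - 1) = 1 := by
    rw [← zpow_natCast qq (k-N-1), ← zpow_add₀ qq_ne_zero,
      show (N:ℤ) - k + 1 + ((k-N-1 : ℕ) : ℤ) = 0 by omega]
    exact zpow_zero qq
  rw [hz]; ring

lemma qbinom_zero (N : ℕ) : qbinom N 0 = 1 := by simp [qbinom, qpoch]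

lemma pascalA_nat (N s : ℕ) :
    qbinom (N+1) (s+1) = qbinom N s + qq^(s+1) * qbinom N (s+1) := by
  rcases le_or_gt s N with h | h
  · rw [qbinom_def', qbinom_def', qbinom_def',
      Nm_eq_T (by omega), Nm_eq_T (by omega), Nm_eq_T (by omega),
      show N + 1 + 1 - (s+1) = N + 1 - s by omega,
      show N + 1 - (s+1) = N - s by omega,
      show T (N+1-s) (s+1) = T (N+1-s) s * (1 - qq^(N+1)) by rw [T_succ]; congr 3; omega,
      show T (N-s) (s+1) = (1 - qq^(N-s)) * T (N+1-s) s by rw [T_succ']; congr 3; omega,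
      T_succ 1 s]
    have hD := T_ne_zero (u := 1) (k := s) le_rfl
    have hf : (1 : F) - qq^(1+s) ≠ 0 := one_sub_qq_pow_ne_zero (by omega)
    have hsplit : (qq : F)^(N+1) = qq^(s+1) * qq^(N-s) := by
      rw [← pow_add]; congr 1; omega
    rw [hsplit]
    field_simp
    ring
  · rw [qbinom_zero_of_lt (by omega), qbinom_zero_of_lt (by omega), qbinom_zero_of_lt (by omega)]
    ring

lemma pascalB_nat (N s : ℕ) (h : s ≤ N) :
    qbinom (N+1) (s+1) = qbinom N (s+1) + qq^(N-s) * qbinom N s := by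
  rw [qbinom_def', qbinom_def', qbinom_def',
    Nm_eq_T (by omega), Nm_eq_T (by omega), Nm_eq_T (by omega),
    show N + 1 + 1 - (s+1) = N + 1 - s by omega,
    show N + 1 - (s+1) = N - s by omega,
    show T (N+1-s) (s+1) = T (N+1-s) s * (1 - qq^(N+1)) by rw [T_succ]; congr 3; omega,
    show T (N-s) (s+1) = (1 - qq^(N-s)) * T (N+1-s) s by rw [T_succ']; congr 3; omega,
    T_succ 1 s]
  have hD := T_ne_zero (u := 1) (k := s) le_rfl
  have hf : (1 : F) - qq^(1+s) ≠ 0 := one_sub_qq_pow_ne_zero (by omega)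
  have hsplit : (qq : F)^(N+1) = qq^(N-s) * qq^(s+1) := by
    rw [← pow_add]; congr 1; omega
  rw [hsplit, show (1:F) - qq^(N-s)*qq^(s+1) = 1 - qq^(N-s)*qq^(1+s) by ring_nf]
  field_simp
  ring

/-- extended Gaussian binomial, zero for negative index -/
def gb (N : ℕ) (m : ℤ) : F := if 0 ≤ m then qbinom N m.toNat else 0

lemma gb_neg {N : ℕ} {m : ℤ} (h : m < 0) : gb N m = 0 := by
  rw [gb, if_neg (by omega)]

lemma gb_pascalA (N : ℕ) (j : ℤ) : gb (N+1) j = gb N (j-1) + qq ^ j * gb N j := by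
  rcases lt_trichotomy j 0 with h | h | h
  · rw [gb_neg h, gb_neg (by omega), gb_neg h]; ring
  · subst h
    rw [gb_neg (by omega : (0:ℤ)-1 < 0)]
    simp [gb, qbinom_zero]
  · have h1 : (0:ℤ) ≤ j := le_of_lt h
    obtain ⟨s, hs⟩ : ∃ s : ℕ, j = (s : ℤ) + 1 := ⟨(j-1).toNat, by omega⟩
    subst hs
    rw [gb, if_pos (by omega), gb, if_pos (by omega), gb, if_pos (by omega),
      show ((s:ℤ)+1-1).toNat = s by omega, show ((s:ℤ)+1).toNat = s + 1 by omega,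
      show (qq : F) ^ ((s:ℤ)+1) = qq ^ (s+1) by rw [← zpow_natCast]; norm_cast]
    exact pascalA_nat N s

lemma gb_pascalB (N : ℕ) (j : ℤ) : gb (N+1) j = gb N j + qq ^ ((N:ℤ) + 1 - j) * gb N (j-1) := by
  rcases lt_trichotomy j 0 with h | h | h
  · rw [gb_neg (N := N+1) h, gb_neg (N := N) h, gb_neg (N := N) (show j-1 < 0 by omega)]; ring
  · subst h
    rw [gb_neg (by omega : (0:ℤ)-1 < 0)]
    simp [gb, qbinom_zero]
  · obtain ⟨s, hs⟩ : ∃ s : ℕ, j = (s : ℤ) + 1 := ⟨(j-1).toNat, by omega⟩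
    subst hs
    rw [gb, if_pos (by omega), gb, if_pos (by omega), gb, if_pos (by omega),
      show ((s:ℤ)+1-1).toNat = s by omega, show ((s:ℤ)+1).toNat = s + 1 by omega]
    rcases le_or_gt s N with hsN | hsN
    · rw [show (N:ℤ) + 1 - ((s:ℤ)+1) = ((N - s : ℕ) : ℤ) by omega, zpow_natCast]
      exact pascalB_nat N s hsN
    · rw [qbinom_zero_of_lt (by omega), qbinom_zero_of_lt (by omega),
        qbinom_zero_of_lt (by omega)]
      ring

lemma two_mul_half (m : ℤ) : 2 * (m * (m-1) / 2) = m * (m-1) :=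
  Int.two_mul_ediv_two_of_even (by
    have := Int.even_mul_succ_self (m-1)
    simpa [sub_add_cancel, mul_comm] using this)

/-- Coefficients of the two-variable q-Dyson product, defined recursively. -/
def gcoef : ℕ → ℕ → ℤ → F
  | 0, 0, m => if m = 0 then 1 else 0
  | 0, b+1, m => gcoef 0 b m - qq ^ (b+1) * gcoef 0 b (m+1)
  | a+1, b, m => gcoef a b m - qq ^ a * gcoef a b (m-1)

lemma gcoef_eq (a b : ℕ) (m : ℤ) :
    gcoef a b m = (-1 : F) ^ m * qq ^ (m * (m-1) / 2) * gb (a+b) ((a:ℤ) - m) := by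
  have hq := qq_ne_zero
  have hneg : (-1 : F) ≠ 0 := by norm_num
  induction a generalizing m with
  | zero =>
    induction b generalizing m with
    | zero =>
      rw [gcoef]
      simp only [Nat.add_zero, Nat.cast_zero, zero_sub]
      by_cases hm : m = 0
      · subst hm
        simp [gb, qbinom_zero]
      · rw [if_neg hm]
        rcases lt_or_gt_of_ne hm with h | h
        · rw [gb, if_pos (by omega), qbinom_zero_of_lt (show (0:ℕ) < (-m).toNat by omega)]
          ring
        · rw [gb_neg (by omega)]; ring
    | succ b ihb =>
      rw [gcoef, ihb, ihb]
      simp only [Nat.cast_zero, zero_sub, neg_add]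
      rw [show -m + -1 = -m - 1 by ring]
      rw [show (0:ℕ) + (b+1) = (0 + b) + 1 by omega, gb_pascalB (0+b) (-m)]
      have h2 : ((-1 : F)) ^ (m+1) = (-1) ^ m * (-1) := by
        rw [zpow_add₀ hneg, zpow_one]
      have e3 : (qq : F) ^ (b+1) = qq ^ ((b:ℤ)+1) := by
        rw [← zpow_natCast]; norm_cast
      have h1 : (qq : F) ^ (m * (m-1) / 2) * qq ^ (((0+b:ℕ):ℤ) + 1 - -m)
          = qq ^ ((b:ℤ)+1) * qq ^ ((m+1) * (m+1-1) / 2) := by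
        rw [← zpow_add₀ hq, ← zpow_add₀ hq]
        congr 1
        have e1 := two_mul_half m
        have e2 := two_mul_half (m+1)
        have e3 : (m+1) * (m+1-1) = m*(m-1) + 2*m := by ring
        omega
      rw [h2, e3]
      linear_combination (-((-1 : F) ^ m) * gb (0+b) (-m-1)) * h1
  | succ a iha =>
    rw [gcoef, iha, iha]
    rw [show (a+1) + b = (a + b) + 1 by omega,
      show ((((a+1):ℕ)):ℤ) - m = (a:ℤ) + 1 - m by push_cast; ring,
      gb_pascalA (a+b) ((a:ℤ) + 1 - m),
      show ((a:ℤ)+1-m) - 1 = (a:ℤ) - m by ring]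
    have h2 : ((-1 : F)) ^ m = (-1) ^ (m-1) * (-1) := by
      rw [← zpow_add_one₀ hneg, sub_add_cancel]
    have e3 : (qq : F) ^ a = qq ^ ((a:ℤ)) := by
      rw [← zpow_natCast]
    have h1 : (qq : F) ^ (m * (m-1) / 2) * qq ^ ((a:ℤ) + 1 - m)
        = qq ^ ((a:ℤ)) * qq ^ ((m-1) * (m-1-1) / 2) := by
      rw [← zpow_add₀ hq, ← zpow_add₀ hq]
      congr 1
      have e1 := two_mul_half m
      have e2 := two_mul_half (m-1)
      have e4 : (m-1) * (m-1-1) = m*(m-1) - 2*(m-1) := by ring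
      omega
    rw [show (a:ℤ) - (m-1) = (a:ℤ) + 1 - m by ring, h2, e3]
    linear_combination ((-1 : F) ^ (m-1) * gb (a+b) ((a:ℤ)+1-m)) * h1

/-! ### one-variable model -/

abbrev S : Type := AddMonoidAlgebra F ℤ

/-- the two-variable q-Dyson product in one variable `t = x₁/x₂`. -/
def P1 (a b : ℕ) : S :=
  qpoch (AddMonoidAlgebra.single 1 1) (AddMonoidAlgebra.single 0 qq) a *
    qpoch (AddMonoidAlgebra.single (-1) qq) (AddMonoidAlgebra.single 0 qq) b

lemma single_zero_pow (c : F) (k : ℕ) :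
    (AddMonoidAlgebra.single (0:ℤ) c) ^ k = AddMonoidAlgebra.single (0:ℤ) (c ^ k) := by
  rw [AddMonoidAlgebra.single_pow, smul_zero]

lemma qpoch_succ {A : Type*} [CommRing A] (z q : A) (m : ℕ) :
    qpoch z q (m+1) = qpoch z q m * (1 - z * q ^ m) := Finset.prod_range_succ _ _

lemma P1_coeff (a b : ℕ) (m : ℤ) : (P1 a b).coeff m = gcoef a b m := by
  induction a generalizing m with
  | zero =>
    induction b generalizing m with
    | zero =>
      rw [gcoef]
      show ((1 : S) * 1).coeff m = _
      rw [mul_one, AddMonoidAlgebra.one_def, AddMonoidAlgebra.coeff_single, Finsupp.single_apply]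
      simp [eq_comm]
    | succ b ihb =>
      have key : P1 0 (b+1)
          = P1 0 b * (1 - AddMonoidAlgebra.single (-1 : ℤ) (qq ^ (b+1))) := by
        unfold P1
        rw [qpoch_succ, single_zero_pow, AddMonoidAlgebra.single_mul_single]
        rw [show (-1 : ℤ) + 0 = -1 by ring, show qq * qq ^ b = qq ^ (b+1) by ring]
        ring
      rw [key, mul_sub, mul_one, AddMonoidAlgebra.coeff_sub, Finsupp.sub_apply,
        AddMonoidAlgebra.coeff_mul_single_apply, neg_neg, ihb, ihb, gcoef]
      ring
  | succ a iha =>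
    have key : P1 (a+1) b
        = P1 a b * (1 - AddMonoidAlgebra.single (1 : ℤ) (qq ^ a)) := by
      unfold P1
      rw [qpoch_succ, single_zero_pow, AddMonoidAlgebra.single_mul_single]
      rw [show (1 : ℤ) + 0 = 1 by ring, one_mul]
      ring
    rw [key, mul_sub, mul_one, AddMonoidAlgebra.coeff_sub, Finsupp.sub_apply,
      AddMonoidAlgebra.coeff_mul_single_apply, ← sub_eq_add_neg, iha, iha, gcoef]
    ring

/-! ### transfer to two variables -/

def dvec : Fin 2 →₀ ℤ := Finsupp.single 0 1 - Finsupp.single 1 1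

def gmap : ℤ →+ (Fin 2 →₀ ℤ) := zmultiplesHom _ dvec

lemma gmap_apply (m : ℤ) : gmap m = m • dvec := rfl

lemma gmap_inj : Function.Injective gmap := by
  intro m m' h
  have h0 := congrArg (fun f => f 0) h
  simp only [gmap_apply, Finsupp.smul_apply, smul_eq_mul] at h0
  have hd : dvec 0 = 1 := by simp [dvec]
  rw [hd, mul_one, mul_one] at h0
  exact h0

def phi : S →+* R 2 := AddMonoidAlgebra.mapDomainRingHom F gmap

lemma phi_single (m : ℤ) (c : F) :
    phi (AddMonoidAlgebra.single m c) = AddMonoidAlgebra.single (m • dvec) c := by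
  show AddMonoidAlgebra.mapDomain gmap (AddMonoidAlgebra.single m c) = _
  rw [AddMonoidAlgebra.mapDomain_single, gmap_apply]

lemma CT_phi (p : S) : CT (phi p) = p.coeff 0 := by
  show Finsupp.mapDomain gmap p.coeff 0 = p.coeff 0
  have h0 : (0 : Fin 2 →₀ ℤ) = gmap 0 := by rw [map_zero]
  rw [h0, Finsupp.mapDomain_apply gmap_inj]

lemma map_qpoch {A B : Type*} [CommRing A] [CommRing B] (f : A →+* B) (z q : A) (m : ℕ) :
    f (qpoch z q m) = qpoch (f z) (f q) m := by
  simp [qpoch]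

lemma ev_sub_pi (i j : Fin 2) :
    Finsupp.equivFunOnFinite.symm ((Pi.single i 1 : Fin 2 → ℤ) - Pi.single j 1)
      = Finsupp.single i 1 - Finsupp.single j 1 := by
  ext k
  simp only [Finsupp.coe_equivFunOnFinite_symm, Pi.sub_apply, Finsupp.coe_sub,
    Finsupp.single_apply, Pi.single_apply]
  congr 1 <;> [skip; skip] <;> simp [eq_comm]

lemma phi_P1 (a : Fin 2 → ℕ) : phi (P1 (a 0) (a 1)) = dyson a := by
  have hd : dyson a =
      qpoch (Xm (Pi.single 0 1 - Pi.single 1 1)) (CC qq) (a 0) *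
        qpoch (CC qq * Xm (Pi.single 1 1 - Pi.single 0 1)) (CC qq) (a 1) := by
    rw [dyson, Fin.prod_univ_two,
      show (Finset.Ioi (0 : Fin 2)) = {1} from by decide,
      show (Finset.Ioi (1 : Fin 2)) = ∅ from by decide]
    simp
  have h1 : Xm ((Pi.single 0 1 : Fin 2 → ℤ) - Pi.single 1 1)
      = AddMonoidAlgebra.single ((1:ℤ) • dvec) 1 := by
    rw [Xm, ev_sub_pi, one_smul, dvec]
  have h2 : CC (qq) * Xm ((Pi.single 1 1 : Fin 2 → ℤ) - Pi.single 0 1)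
      = AddMonoidAlgebra.single ((-1:ℤ) • dvec) qq := by
    rw [CC, Xm, ev_sub_pi, AddMonoidAlgebra.single_mul_single, zero_add, mul_one]
    congr 1
    rw [neg_smul, one_smul, dvec]
    abel
  have h3 : (CC (qq) : R 2) = AddMonoidAlgebra.single ((0:ℤ) • dvec) qq := by
    rw [CC, zero_smul]
  rw [hd, P1, map_mul, map_qpoch, map_qpoch, phi_single, phi_single, phi_single,
    h1, h2, h3]

end QD

/-- The Zeilberger–Bressoud q-Dyson theorem for n = 2. -/
theorem stmt6 (a : Fin 2 → ℕ) :
    CT (dyson a) = qbinom (a 0 + a 1) (a 0) := by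
  rw [← QD.phi_P1 a, QD.CT_phi, QD.P1_coeff, QD.gcoef_eq]
  simp only [zpow_zero, one_mul, mul_zero, sub_zero]
  rw [QD.gb, if_pos (by positivity), Int.toNat_natCast]
  norm_num

end
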